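/- For every function f : ℕ → ℕ there exists a function g : ℕ → ℤ such that: (i) for all x, y ∈ ℕ, the integer (x − y) divides g(x) − g(y); and (ii) for all x ∈ ℕ, f(x) − 2^x·lcm(x) ≤ g(x) ≤ f(x), where lcm(x) denotes the least common multiple of the integers 1, 2, …, x (with lcm(0) = 1). -/

import Mathlib

/-- `lcmUpTo x` is the least common multiple of `1, 2, …, x` (with `lcmUpTo 0 = 1`). -/
def lcmUpTo (x : ℕ) : ℕ := (Finset.Icc 1 x).lcm id

/-- CRT for pairwise coprime moduli with arbitrary integer targets. -/
lemma crt_aux (s : Finset ℕ) (m : ℕ → ℕ) (t : ℕ → ℤ)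
    (hco : ∀ p ∈ s, ∀ q ∈ s, p ≠ q → Nat.Coprime (m p) (m q)) :
    ∃ v : ℤ, ∀ p ∈ s, (m p : ℤ) ∣ v - t p := by
  classical
  induction s using Finset.induction_on with
  | empty => exact ⟨0, by simp⟩
  | @insert a s ha ih =>
    obtain ⟨v, hv⟩ := ih (fun p hp q hq hpq =>
      hco p (Finset.mem_insert_of_mem hp) q (Finset.mem_insert_of_mem hq) hpq)
    set M : ℤ := ∏ p ∈ s, (m p : ℤ) with hM
    have hcop : IsCoprime M ((m a : ℕ) : ℤ) := by
      apply IsCoprime.prod_left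
      intro p hp
      exact Nat.Coprime.isCoprime (hco p (Finset.mem_insert_of_mem hp) a
        (Finset.mem_insert_self a s) (by rintro rfl; exact ha hp))
    obtain ⟨u, w, huw⟩ := hcop
    refine ⟨v + M * (u * (t a - v)), ?_⟩
    intro p hp
    rcases Finset.mem_insert.mp hp with h | hp
    · rw [h]
      have : v + M * (u * (t a - v)) - t a = (v - t a) * (w * (m a : ℤ)) := by
        have h1 : w * (m a : ℤ) = 1 - u * M := by linarith
        rw [h1]; ring
      rw [this]
      exact ⟨(v - t a) * w, by ring⟩
    · have h1 : (m p : ℤ) ∣ v - t p := hv p hp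
      have h2 : (m p : ℤ) ∣ M := Finset.dvd_prod_of_mem _ hp
      have : v + M * (u * (t a - v)) - t p = (v - t p) + M * (u * (t a - v)) := by ring
      rw [this]
      exact dvd_add h1 (h2.mul_right _)

lemma step_aux (f : ℕ → ℕ) (n : ℕ) (g : ℕ → ℤ)
    (hg : ∀ y < n, ∀ z < n, ((y : ℤ) - z) ∣ g y - g z) :
    ∃ v : ℤ, (∀ y < n, ((n : ℤ) - y) ∣ v - g y) ∧
      (f n : ℤ) - 2 ^ n * (lcmUpTo n : ℤ) ≤ v ∧ v ≤ (f n : ℤ) := by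
  classical
  set P : Finset ℕ := (Finset.range (n + 1)).filter Nat.Prime with hP
  have hcop : ∀ p ∈ P, ∀ q ∈ P, p ≠ q →
      Nat.Coprime (p ^ Nat.log p n) (q ^ Nat.log q n) := by
    intro p hp q hq hpq
    simp only [hP, Finset.mem_filter] at hp hq
    exact Nat.Coprime.pow _ _ ((Nat.coprime_primes hp.2 hq.2).mpr hpq)
  obtain ⟨v0, hv0⟩ := crt_aux P (fun p => p ^ Nat.log p n)
      (fun p => g (n - p ^ Nat.log p n)) hcop
  -- key divisibility for every 1 ≤ d ≤ n
  have key : ∀ d : ℕ, 1 ≤ d → d ≤ n → (d : ℤ) ∣ v0 - g (n - d) := by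
    intro d hd1 hdn
    have hn0 : n ≠ 0 := by omega
    rw [Int.natCast_dvd]
    rw [Nat.dvd_iff_prime_pow_dvd_dvd]
    intro p k pk hpk
    rcases Nat.eq_zero_or_pos k with rfl | hk
    · simpa using one_dvd _
    have hp : p.Prime := by first | exact pk | exact Nat.prime_iff.mpr pk
    have hpd : p ∣ d := dvd_trans (dvd_pow_self p (by omega)) hpk
    have hpn : p ≤ n := le_trans (Nat.le_of_dvd (by omega) hpd) hdn
    have hpP : p ∈ P := by
      simp only [hP, Finset.mem_filter, Finset.mem_range]
      exact ⟨by omega, hp⟩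
    set b := Nat.log p n with hb
    have hpbn : p ^ b ≤ n := Nat.pow_log_le_self p hn0
    have hpkd : p ^ k ≤ d := Nat.le_of_dvd (by omega) hpk
    have hkb : k ≤ b := (Nat.le_log_iff_pow_le hp.one_lt hn0).mpr (le_trans hpkd hdn)
    have hpb1 : 1 ≤ p ^ b := Nat.one_le_pow _ _ hp.pos
    rw [← Int.natCast_dvd]
    have h1 : ((p : ℤ) ^ k) ∣ v0 - g (n - p ^ b) := by
      have := hv0 p hpP
      calc ((p : ℤ) ^ k) ∣ ((p ^ b : ℕ) : ℤ) := by
            push_cast; exact pow_dvd_pow _ hkb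
        _ ∣ v0 - g (n - p ^ b) := this
    have h2 : ((p : ℤ) ^ k) ∣ g (n - p ^ b) - g (n - d) := by
      have hlt1 : n - p ^ b < n := Nat.sub_lt (by omega) (by omega)
      have hlt2 : n - d < n := Nat.sub_lt (by omega) (by omega)
      have hdvd := hg _ hlt1 _ hlt2
      have hcast : (((n - p ^ b : ℕ) : ℤ) - ((n - d : ℕ) : ℤ)) = (d : ℤ) - (p ^ b : ℕ) := by
        rw [Nat.cast_sub hpbn, Nat.cast_sub hdn]; ring
      rw [hcast] at hdvd
      refine dvd_trans ?_ hdvd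
      have hd1 : ((p : ℤ) ^ k) ∣ (d : ℤ) := by
        rw [show ((p : ℤ) ^ k) = ((p ^ k : ℕ) : ℤ) by push_cast; ring]
        exact Int.natCast_dvd_natCast.mpr hpk
      have hd2 : ((p : ℤ) ^ k) ∣ ((p ^ b : ℕ) : ℤ) := by
        push_cast; exact pow_dvd_pow _ hkb
      exact dvd_sub hd1 hd2
    have := dvd_add h1 h2
    push_cast
    simpa using this
  -- now shift v0 into the right window
  set L : ℕ := lcmUpTo n with hLdef
  have hLpos : 0 < L := by
    rcases Nat.eq_zero_or_pos L with h0 | h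
    · exfalso
      rw [hLdef, lcmUpTo] at h0
      rw [Finset.lcm_eq_zero_iff] at h0
      obtain ⟨x, hx, hx0⟩ := h0
      simp only [Finset.mem_coe, Finset.mem_Icc, id] at hx hx0
      omega
    · exact h
  have hdL : ∀ d : ℕ, 1 ≤ d → d ≤ n → d ∣ L := by
    intro d h1 h2
    exact Finset.dvd_lcm (by simp [Finset.mem_Icc]; omega)
  set v : ℤ := v0 + (L : ℤ) * (((f n : ℤ) - v0) / L) with hv
  have hmod : (f n : ℤ) - v = ((f n : ℤ) - v0) % L := by
    have := Int.mul_ediv_add_emod ((f n : ℤ) - v0) (L : ℤ)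
    rw [hv]; linarith
  have hLZ : (0 : ℤ) < (L : ℤ) := by exact_mod_cast hLpos
  have hmod1 : (0 : ℤ) ≤ ((f n : ℤ) - v0) % L := Int.emod_nonneg _ (by omega)
  have hmod2 : ((f n : ℤ) - v0) % L < L := Int.emod_lt_of_pos _ hLZ
  refine ⟨v, ?_, ?_, ?_⟩
  · intro y hy
    set d := n - y with hd
    have hd1 : 1 ≤ d := by omega
    have hdn : d ≤ n := by omega
    have hny : (n : ℤ) - y = (d : ℤ) := by rw [hd]; push_cast [Nat.cast_sub hy.le]; ring
    have hyd : n - d = y := by omega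
    rw [hny]
    have h1 : (d : ℤ) ∣ v0 - g y := by have := key d hd1 hdn; rwa [hyd] at this
    have h2 : (d : ℤ) ∣ (L : ℤ) := Int.natCast_dvd_natCast.mpr (hdL d hd1 hdn)
    have : v - g y = (v0 - g y) + (L : ℤ) * (((f n : ℤ) - v0) / L) := by rw [hv]; ring
    rw [this]
    exact dvd_add h1 (h2.mul_right _)
  · have h2n : (1 : ℤ) ≤ 2 ^ n := one_le_pow₀ (by norm_num)
    nlinarith
  · omega

/-- `0` if `y ≥ n`, used to cut off recursion. -/
private noncomputable def stepChoice (f : ℕ → ℕ) (n : ℕ) (g : ℕ → ℤ) : ℤ := by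
  classical
  by_cases hg : ∀ y < n, ∀ z < n, ((y : ℤ) - z) ∣ g y - g z
  · exact (step_aux f n g hg).choose
  · exact 0

lemma stepChoice_spec (f : ℕ → ℕ) (n : ℕ) (g : ℕ → ℤ)
    (hg : ∀ y < n, ∀ z < n, ((y : ℤ) - z) ∣ g y - g z) :
    (∀ y < n, ((n : ℤ) - y) ∣ stepChoice f n g - g y) ∧
      (f n : ℤ) - 2 ^ n * (lcmUpTo n : ℤ) ≤ stepChoice f n g ∧
      stepChoice f n g ≤ (f n : ℤ) := by
  rw [stepChoice, dif_pos hg]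
  exact (step_aux f n g hg).choose_spec

noncomputable def Gfun (f : ℕ → ℕ) : ℕ → ℤ
  | n => stepChoice f n (fun y => if h : y < n then Gfun f y else 0)

lemma Gfun_inv (f : ℕ → ℕ) : ∀ n : ℕ,
    (∀ y < n, ((n : ℤ) - y) ∣ Gfun f n - Gfun f y) ∧
      (f n : ℤ) - 2 ^ n * (lcmUpTo n : ℤ) ≤ Gfun f n ∧ Gfun f n ≤ (f n : ℤ) := by
  intro n
  induction n using Nat.strong_induction_on with
  | _ n ih =>
    set g : ℕ → ℤ := fun y => if h : y < n then Gfun f y else 0 with hgdef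
    have hg : ∀ y < n, ∀ z < n, ((y : ℤ) - z) ∣ g y - g z := by
      intro y hy z hz
      simp only [hgdef, dif_pos hy, dif_pos hz]
      rcases lt_trichotomy y z with h | rfl | h
      · have := (ih z hz).1 y h
        have hneg : (y : ℤ) - z = -((z : ℤ) - y) := by ring
        rw [hneg, neg_dvd]
        have : Gfun f y - Gfun f z = -(Gfun f z - Gfun f y) := by ring
        rw [this, dvd_neg]
        exact (ih z hz).1 y h
      · simp
      · exact (ih y hy).1 z h
    have hspec := stepChoice_spec f n g hg
    have hGn : Gfun f n = stepChoice f n g := by rw [Gfun]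
    refine ⟨?_, ?_, ?_⟩
    · intro y hy
      have := hspec.1 y hy
      rw [hgdef] at this
      simp only [dif_pos hy] at this
      rwa [hGn]
    · rw [hGn]; exact hspec.2.1
    · rw [hGn]; exact hspec.2.2

theorem stmt_13 (f : ℕ → ℕ) :
    ∃ g : ℕ → ℤ,
      -- (i) x - y divides g(x) - g(y)
      (∀ x y : ℕ, ((x : ℤ) - (y : ℤ)) ∣ (g x - g y)) ∧
      -- (ii) f(x) - 2^x·lcm(x) ≤ g(x) ≤ f(x)
      (∀ x : ℕ, (f x : ℤ) - 2 ^ x * (lcmUpTo x : ℤ) ≤ g x ∧ g x ≤ (f x : ℤ)) := by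
  refine ⟨Gfun f, ?_, ?_⟩
  · intro x y
    rcases lt_trichotomy x y with h | rfl | h
    · have := (Gfun_inv f y).1 x h
      have hneg : (x : ℤ) - y = -((y : ℤ) - x) := by ring
      rw [hneg, neg_dvd]
      have h2 : Gfun f x - Gfun f y = -(Gfun f y - Gfun f x) := by ring
      rw [h2, dvd_neg]
      exact this
    · simp
    · exact (Gfun_inv f x).1 y h
  · intro x
    exact (Gfun_inv f x).2
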